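/- Let (G, ≤) be a lefthanded graph with labels p_v ∈ [0,1] such that B(S) > 0 for all S ⊆ V, and x_v = p_v·B(F_v)/B(D_v). Then for every vertex v, Π_{u ∈ N_v} (B(D̄_u)/B(D_u)) = (Π_{u ∈ μ(D_v)} B(D̄_u)) · (Π_{u ∈ μ(F_v)} B(D̄_u))^{−1} = B(D_v)/B(F_v). -/

import Mathlib

open scoped Classical

/-- A tree order: whenever `w < u` and `w < v`, the elements `u` and `v` are comparable. -/
def TreeOrder (V : Type*) [PartialOrder V] : Prop :=
  ∀ w u v : V, w < u → w < v → (u ≤ v ∨ v ≤ u)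

/-- A lefthanded graph with respect to the partial order on `V`. -/
def Lefthanded {V : Type*} [PartialOrder V] (G : SimpleGraph V) : Prop :=
  TreeOrder V ∧
  (∀ u v : V, G.Adj u v → u ≤ v ∨ v ≤ u) ∧
  (∀ w u v : V, w < u → u < v → G.Adj v w → G.Adj v u)

/-- `D_v = {u : u < v}`. -/
noncomputable def Dset {V : Type*} [Fintype V] [PartialOrder V] (v : V) : Finset V :=
  Finset.univ.filter (fun u => u < v)

/-- `D̄_v = D_v ∪ {v}`. -/
noncomputable def Dbar {V : Type*} [Fintype V] [DecidableEq V] [PartialOrder V] (v : V) :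
    Finset V :=
  insert v (Dset v)

/-- `N_v = {u < v : u ~ v}`. -/
noncomputable def Nset {V : Type*} [Fintype V] [PartialOrder V] (G : SimpleGraph V) (v : V) :
    Finset V :=
  Finset.univ.filter (fun u => u < v ∧ G.Adj u v)

/-- `F_v = D_v \ N_v`. -/
noncomputable def Fset {V : Type*} [Fintype V] [DecidableEq V] [PartialOrder V]
    (G : SimpleGraph V) (v : V) : Finset V :=
  Dset v \ Nset G v

/-- `μ(U)`: the set of maximal elements of `U`. -/
noncomputable def maxElts {V : Type*} [PartialOrder V] (U : Finset V) : Finset V :=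
  U.filter (fun u => ∀ w ∈ U, ¬ u < w)

/-- `I` is an independent set of `G`. -/
def IndepSet {V : Type*} (G : SimpleGraph V) (I : Finset V) : Prop :=
  ∀ u ∈ I, ∀ w ∈ I, ¬ G.Adj u w

/-- `B(S) = Σ_{I ⊆ S, I independent} (−1)^{|I|} Π_{v∈I} p_v`. -/
noncomputable def Bfun {V : Type*} [Fintype V] (G : SimpleGraph V) (p : V → ℝ) (S : Finset V) :
    ℝ :=
  ∑ I ∈ S.powerset.filter (fun I => IndepSet G I), (-1 : ℝ) ^ I.card * ∏ v ∈ I, p v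

/-- `𝔮(S) = Σ_{I ⊇ S, I independent} (−1)^{|I|−|S|} Π_{v∈I} p_v`. -/
noncomputable def qfun {V : Type*} [Fintype V] (G : SimpleGraph V) (p : V → ℝ) (S : Finset V) :
    ℝ :=
  ∑ I ∈ Finset.univ.powerset.filter (fun I => IndepSet G I ∧ S ⊆ I),
    (-1 : ℝ) ^ (I.card - S.card) * ∏ v ∈ I, p v

/-- A down-closed set. -/
def DownClosed {V : Type*} [Fintype V] [PartialOrder V] (S : Finset V) : Prop :=
  ∀ s ∈ S, Dset s ⊆ S

section AuxLemmas

variable {V : Type*} [Fintype V] [DecidableEq V]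

lemma indepSet_subset {G : SimpleGraph V} {I J : Finset V} (h : IndepSet G J) (hIJ : I ⊆ J) :
    IndepSet G I := fun u hu w hw => h u (hIJ hu) w (hIJ hw)

lemma Bfun_empty (G : SimpleGraph V) (p : V → ℝ) : Bfun G p (∅ : Finset V) = 1 := by
  have h0 : IndepSet G (∅ : Finset V) := fun u hu => by simp at hu
  simp [Bfun, Finset.powerset_empty, Finset.filter_singleton, h0]

lemma Bfun_union (G : SimpleGraph V) (p : V → ℝ) {A B : Finset V} (hd : Disjoint A B)
    (hne : ∀ a ∈ A, ∀ b ∈ B, ¬ G.Adj a b) :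
    Bfun G p (A ∪ B) = Bfun G p A * Bfun G p B := by
  unfold Bfun
  rw [Finset.sum_mul_sum, ← Finset.sum_product']
  refine Finset.sum_nbij' (i := fun K => (K ∩ A, K ∩ B))
    (j := fun IJ : Finset V × Finset V => IJ.1 ∪ IJ.2) ?_ ?_ ?_ ?_ ?_
  · intro K hK
    rw [Finset.mem_filter, Finset.mem_powerset] at hK
    rw [Finset.mem_product, Finset.mem_filter, Finset.mem_filter,
      Finset.mem_powerset, Finset.mem_powerset]
    exact ⟨⟨Finset.inter_subset_right, indepSet_subset hK.2 Finset.inter_subset_left⟩,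
      ⟨Finset.inter_subset_right, indepSet_subset hK.2 Finset.inter_subset_left⟩⟩
  · intro IJ hIJ
    rw [Finset.mem_product, Finset.mem_filter, Finset.mem_filter,
      Finset.mem_powerset, Finset.mem_powerset] at hIJ
    rw [Finset.mem_filter, Finset.mem_powerset]
    constructor
    · exact Finset.union_subset (hIJ.1.1.trans Finset.subset_union_left)
        (hIJ.2.1.trans Finset.subset_union_right)
    · intro x hx y hy hadj
      rcases Finset.mem_union.mp hx with hx | hx <;> rcases Finset.mem_union.mp hy with hy | hy
      · exact hIJ.1.2 x hx y hy hadj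
      · exact hne x (hIJ.1.1 hx) y (hIJ.2.1 hy) hadj
      · exact hne y (hIJ.1.1 hy) x (hIJ.2.1 hx) hadj.symm
      · exact hIJ.2.2 x hx y hy hadj
  · intro K hK
    rw [Finset.mem_filter, Finset.mem_powerset] at hK
    simp only
    rw [← Finset.inter_union_distrib_left, Finset.inter_eq_left.mpr hK.1]
  · intro IJ hIJ
    rw [Finset.mem_product, Finset.mem_filter, Finset.mem_filter,
      Finset.mem_powerset, Finset.mem_powerset] at hIJ
    have h1 : IJ.1 ∩ A = IJ.1 := Finset.inter_eq_left.mpr hIJ.1.1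
    have h2 : IJ.2 ∩ B = IJ.2 := Finset.inter_eq_left.mpr hIJ.2.1
    have h3 : IJ.2 ∩ A = ∅ := Finset.eq_empty_of_forall_notMem fun x hx =>
      (Finset.disjoint_right.mp hd) (hIJ.2.1 (Finset.mem_inter.mp hx).1)
        (Finset.mem_inter.mp hx).2
    have h4 : IJ.1 ∩ B = ∅ := Finset.eq_empty_of_forall_notMem fun x hx =>
      (Finset.disjoint_left.mp hd) (hIJ.1.1 (Finset.mem_inter.mp hx).1)
        (Finset.mem_inter.mp hx).2
    rw [Finset.union_inter_distrib_right, Finset.union_inter_distrib_right, h1, h2, h3, h4,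
      Finset.union_empty, Finset.empty_union]
  · intro K hK
    rw [Finset.mem_filter, Finset.mem_powerset] at hK
    have hdK : Disjoint (K ∩ A) (K ∩ B) :=
      hd.mono Finset.inter_subset_right Finset.inter_subset_right
    have hKeq : (K ∩ A) ∪ (K ∩ B) = K := by
      rw [← Finset.inter_union_distrib_left, Finset.inter_eq_left.mpr hK.1]
    have hc : K.card = (K ∩ A).card + (K ∩ B).card := by
      rw [← Finset.card_union_of_disjoint hdK, hKeq]
    have hpr : ∏ x ∈ K, p x = (∏ x ∈ K ∩ A, p x) * ∏ x ∈ K ∩ B, p x := by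
      rw [← Finset.prod_union hdK, hKeq]
    simp only
    rw [hc, hpr, pow_add]
    ring

lemma Bfun_biUnion (G : SimpleGraph V) (p : V → ℝ) (T : Finset V) (f : V → Finset V)
    (hdisj : ∀ a ∈ T, ∀ b ∈ T, a ≠ b → Disjoint (f a) (f b))
    (hne : ∀ a ∈ T, ∀ b ∈ T, a ≠ b → ∀ x ∈ f a, ∀ y ∈ f b, ¬ G.Adj x y) :
    Bfun G p (T.biUnion f) = ∏ t ∈ T, Bfun G p (f t) := by
  classical
  induction T using Finset.induction_on with
  | empty => simp [Bfun_empty]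
  | @insert a s ha ih =>
    have hmem : ∀ b ∈ s, b ∈ insert a s := fun b hb => Finset.mem_insert_of_mem hb
    have haI : a ∈ insert a s := Finset.mem_insert_self a s
    have hd' : Disjoint (f a) (s.biUnion f) := by
      rw [Finset.disjoint_biUnion_right]
      intro b hb
      exact hdisj a haI b (hmem b hb) (fun h => ha (h ▸ hb))
    have hn' : ∀ x ∈ f a, ∀ y ∈ s.biUnion f, ¬ G.Adj x y := by
      intro x hx y hy
      obtain ⟨b, hb, hyb⟩ := Finset.mem_biUnion.mp hy
      exact hne a haI b (hmem b hb) (fun h => ha (h ▸ hb)) x hx y hyb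
    rw [Finset.biUnion_insert, Bfun_union G p hd' hn', Finset.prod_insert ha,
      ih (fun a ha b hb => hdisj a (hmem a ha) b (hmem b hb))
        (fun a ha b hb => hne a (hmem a ha) b (hmem b hb))]

variable [PartialOrder V]

lemma mem_Dset {u v : V} : u ∈ Dset v ↔ u < v := by simp [Dset]

lemma mem_Dbar {u v : V} : u ∈ Dbar v ↔ u ≤ v := by
  simp only [Dbar, Finset.mem_insert, mem_Dset]
  constructor
  · rintro (rfl | h)
    · exact le_refl _
    · exact le_of_lt h
  · intro h
    rcases eq_or_lt_of_le h with rfl | h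
    · exact Or.inl rfl
    · exact Or.inr h

lemma mem_Nset {G : SimpleGraph V} {u v : V} : u ∈ Nset G v ↔ u < v ∧ G.Adj u v := by
  simp [Nset]

lemma mem_Fset {G : SimpleGraph V} {u v : V} :
    u ∈ Fset G v ↔ u < v ∧ ¬ G.Adj u v := by
  simp only [Fset, Finset.mem_sdiff, mem_Dset, mem_Nset]
  tauto

lemma mem_maxElts {U : Finset V} {u : V} :
    u ∈ maxElts U ↔ u ∈ U ∧ ∀ w ∈ U, ¬ u < w := by simp [maxElts]

lemma maxElts_not_le {U : Finset V} {a b : V} (ha : a ∈ maxElts U) (hb : b ∈ maxElts U)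
    (hab : a ≠ b) : ¬ a ≤ b := fun h =>
  (mem_maxElts.mp ha).2 b (mem_maxElts.mp hb).1 (lt_of_le_of_ne h hab)

lemma Dbar_disjoint (ht : TreeOrder V) {a b : V} (hab : ¬ a ≤ b) (hba : ¬ b ≤ a) :
    Disjoint (Dbar a) (Dbar b) := by
  rw [Finset.disjoint_left]
  intro x hxa hxb
  rw [mem_Dbar] at hxa hxb
  rcases eq_or_lt_of_le hxa with rfl | hxa'
  · exact hab hxb
  rcases eq_or_lt_of_le hxb with rfl | hxb'
  · exact hba hxa'.le
  rcases ht x a b hxa' hxb' with h | h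
  · exact hab h
  · exact hba h

lemma Dbar_no_adj {G : SimpleGraph V} (ht : TreeOrder V)
    (hcomp : ∀ u v : V, G.Adj u v → u ≤ v ∨ v ≤ u)
    {a b : V} (hab : ¬ a ≤ b) (hba : ¬ b ≤ a) {x y : V}
    (hx : x ∈ Dbar a) (hy : y ∈ Dbar b) : ¬ G.Adj x y := by
  intro hadj
  have hd := Finset.disjoint_left.mp (Dbar_disjoint ht hab hba)
  rcases hcomp x y hadj with h | h
  · exact hd hx (mem_Dbar.mpr (h.trans (mem_Dbar.mp hy)))
  · exact hd (mem_Dbar.mpr (h.trans (mem_Dbar.mp hx))) hy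

lemma downClosed_biUnion {S : Finset V} (hS : DownClosed S) :
    S = (maxElts S).biUnion Dbar := by
  ext x
  simp only [Finset.mem_biUnion]
  constructor
  · intro hx
    obtain ⟨m, hm, hmax⟩ := (S.filter (fun y => x ≤ y)).exists_maximal
      ⟨x, Finset.mem_filter.mpr ⟨hx, le_refl x⟩⟩
    rw [Finset.mem_filter] at hm
    refine ⟨m, mem_maxElts.mpr ⟨hm.1, fun w hw hlt => lt_irrefl _ (lt_of_lt_of_le hlt (hmax ?_ (le_of_lt hlt)))⟩, mem_Dbar.mpr hm.2⟩
    exact Finset.mem_filter.mpr ⟨hw, hm.2.trans hlt.le⟩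
  · rintro ⟨m, hm, hx⟩
    have hmS := (mem_maxElts.mp hm).1
    rcases eq_or_lt_of_le (mem_Dbar.mp hx) with rfl | h
    · exact hmS
    · exact hS m hmS (mem_Dset.mpr h)

lemma Bfun_downClosed (G : SimpleGraph V) (p : V → ℝ) (ht : TreeOrder V)
    (hcomp : ∀ u v : V, G.Adj u v → u ≤ v ∨ v ≤ u) {S : Finset V} (hS : DownClosed S) :
    Bfun G p S = ∏ w ∈ maxElts S, Bfun G p (Dbar w) := by
  conv_lhs => rw [downClosed_biUnion hS]
  refine Bfun_biUnion G p _ _ ?_ ?_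
  · intro a ha b hb hab
    exact Dbar_disjoint ht (maxElts_not_le ha hb hab) (maxElts_not_le hb ha hab.symm)
  · intro a ha b hb hab x hx y hy
    exact Dbar_no_adj ht hcomp (maxElts_not_le ha hb hab) (maxElts_not_le hb ha hab.symm) hx hy

lemma downClosed_Dset (v : V) : DownClosed (Dset v) := fun s hs t ht =>
  mem_Dset.mpr ((mem_Dset.mp ht).trans (mem_Dset.mp hs))

lemma downClosed_Fset {G : SimpleGraph V} (hG : Lefthanded G) (v : V) :
    DownClosed (Fset G v) := by
  obtain ⟨ht, hcomp, hleft⟩ := hG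
  intro s hs t htm
  rw [mem_Fset] at hs ⊢
  have hts : t < s := mem_Dset.mp htm
  refine ⟨hts.trans hs.1, ?_⟩
  intro hadj
  exact hs.2 ((hleft t s v hts hs.1 hadj.symm).symm)

lemma exists_step {w v : V} (ht : TreeOrder V) (h : ∃ x, w < x ∧ x < v) :
    ∃ u, w < u ∧ u < v ∧ w ∈ maxElts (Dset u) := by
  obtain ⟨x0, hx0⟩ := h
  obtain ⟨u, hu, hmin⟩ := (Finset.univ.filter fun x => w < x ∧ x < v).exists_minimal
    ⟨x0, Finset.mem_filter.mpr ⟨Finset.mem_univ _, hx0⟩⟩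
  rw [Finset.mem_filter] at hu
  refine ⟨u, hu.2.1, hu.2.2, mem_maxElts.mpr ⟨mem_Dset.mpr hu.2.1, ?_⟩⟩
  intro y hy hwy
  exact lt_irrefl _ (lt_of_lt_of_le (mem_Dset.mp hy) (hmin
    (Finset.mem_filter.mpr ⟨Finset.mem_univ _, hwy, (mem_Dset.mp hy).trans hu.2.2⟩)
    (le_of_lt (mem_Dset.mp hy))))

lemma key_union {G : SimpleGraph V} (hG : Lefthanded G) (v : V) :
    maxElts (Dset v) ∪ (Nset G v).biUnion (fun u => maxElts (Dset u))
      = Nset G v ∪ maxElts (Fset G v) := by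
  obtain ⟨ht, hcomp, hleft⟩ := hG
  ext w
  simp only [Finset.mem_union, Finset.mem_biUnion]
  constructor
  · rintro (hw | ⟨u, hu, hw⟩)
    · rw [mem_maxElts, mem_Dset] at hw
      by_cases hN : w ∈ Nset G v
      · exact Or.inl hN
      · refine Or.inr (mem_maxElts.mpr ⟨mem_Fset.mpr ⟨hw.1, ?_⟩, ?_⟩)
        · intro hadj
          exact hN (mem_Nset.mpr ⟨hw.1, hadj⟩)
        · intro x hx
          exact hw.2 x (mem_Dset.mpr (mem_Fset.mp hx).1)
    · rw [mem_maxElts] at hw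
      have hwu : w < u := mem_Dset.mp hw.1
      have huv : u < v := (mem_Nset.mp hu).1
      by_cases hN : w ∈ Nset G v
      · exact Or.inl hN
      · refine Or.inr (mem_maxElts.mpr ⟨mem_Fset.mpr ⟨hwu.trans huv, ?_⟩, ?_⟩)
        · intro hadj
          exact hN (mem_Nset.mpr ⟨hwu.trans huv, hadj⟩)
        · intro x hx hwx
          rw [mem_Fset] at hx
          rcases ht w u x hwu hwx with h | h
          · -- u ≤ x
            rcases eq_or_lt_of_le h with rfl | h'
            · exact hx.2 (mem_Nset.mp hu).2
            · exact hx.2 ((hleft u x v h' hx.1 (mem_Nset.mp hu).2.symm).symm)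
          · -- x ≤ u
            rcases eq_or_lt_of_le h with rfl | h'
            · exact hx.2 (mem_Nset.mp hu).2
            · exact hw.2 x (mem_Dset.mpr h') hwx
  · rintro (hw | hw)
    · by_cases hM : w ∈ maxElts (Dset v)
      · exact Or.inl hM
      · have hwv : w < v := (mem_Nset.mp hw).1
        have hex : ∃ x, w < x ∧ x < v := by
          rw [mem_maxElts] at hM
          push_neg at hM
          obtain ⟨x, hx, hwx⟩ := hM (mem_Dset.mpr hwv)
          exact ⟨x, hwx, mem_Dset.mp hx⟩
        obtain ⟨u, hwu, huv, hmax⟩ := exists_step ht hex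
        refine Or.inr ⟨u, mem_Nset.mpr ⟨huv, ?_⟩, hmax⟩
        exact (hleft w u v hwu huv (mem_Nset.mp hw).2.symm).symm
    · by_cases hM : w ∈ maxElts (Dset v)
      · exact Or.inl hM
      · have hwF := (mem_maxElts.mp hw).1
        have hwv : w < v := (mem_Fset.mp hwF).1
        have hex : ∃ x, w < x ∧ x < v := by
          rw [mem_maxElts] at hM
          push_neg at hM
          obtain ⟨x, hx, hwx⟩ := hM (mem_Dset.mpr hwv)
          exact ⟨x, hwx, mem_Dset.mp hx⟩
        obtain ⟨u, hwu, huv, hmax⟩ := exists_step ht hex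
        refine Or.inr ⟨u, ?_, hmax⟩
        by_contra hN
        exact (mem_maxElts.mp hw).2 u (mem_Fset.mpr ⟨huv, fun hadj =>
          hN (mem_Nset.mpr ⟨huv, hadj⟩)⟩) hwu

end AuxLemmas


theorem stmt16 {V : Type*} [Fintype V] [DecidableEq V] [PartialOrder V]
    (G : SimpleGraph V) (p : V → ℝ) (hp : ∀ v, 0 ≤ p v ∧ p v ≤ 1)
    (hG : Lefthanded G) (hB : ∀ S : Finset V, 0 < Bfun G p S) (v : V) :
    (∏ u ∈ Nset G v, (Bfun G p (Dbar u) / Bfun G p (Dset u))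
      = (∏ u ∈ maxElts (Dset v), Bfun G p (Dbar u)) /
        (∏ u ∈ maxElts (Fset G v), Bfun G p (Dbar u))) ∧
    (∏ u ∈ Nset G v, (Bfun G p (Dbar u) / Bfun G p (Dset u))
      = Bfun G p (Dset v) / Bfun G p (Fset G v)) := by
  obtain ⟨ht, hcomp, hleft⟩ := id hG
  -- abbreviations
  set BD : V → ℝ := fun w => Bfun G p (Dbar w) with hBD
  -- factorizations
  have hDv : Bfun G p (Dset v) = ∏ w ∈ maxElts (Dset v), BD w :=
    Bfun_downClosed G p ht hcomp (downClosed_Dset v)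
  have hFv : Bfun G p (Fset G v) = ∏ w ∈ maxElts (Fset G v), BD w :=
    Bfun_downClosed G p ht hcomp (downClosed_Fset hG v)
  have hDu : ∀ u : V, Bfun G p (Dset u) = ∏ w ∈ maxElts (Dset u), BD w := fun u =>
    Bfun_downClosed G p ht hcomp (downClosed_Dset u)
  -- pairwise disjointness of the maxElts (Dset u), u ∈ Nset
  have hpair : ∀ a ∈ Nset G v, ∀ b ∈ Nset G v, a ≠ b →
      Disjoint (maxElts (Dset a)) (maxElts (Dset b)) := by
    intro a ha b hb hab
    rw [Finset.disjoint_left]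
    intro x hxa hxb
    have hxa' := mem_maxElts.mp hxa
    have hxb' := mem_maxElts.mp hxb
    have h1 : x < a := mem_Dset.mp hxa'.1
    have h2 : x < b := mem_Dset.mp hxb'.1
    rcases ht x a b h1 h2 with h | h
    · rcases eq_or_lt_of_le h with rfl | h'
      · exact hab rfl
      · exact hxb'.2 a (mem_Dset.mpr h') h1
    · rcases eq_or_lt_of_le h with rfl | h'
      · exact hab rfl
      · exact hxa'.2 b (mem_Dset.mpr h') h2
  have hQ : ∏ u ∈ Nset G v, Bfun G p (Dset u)
      = ∏ w ∈ (Nset G v).biUnion (fun u => maxElts (Dset u)), BD w := by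
    rw [Finset.prod_biUnion hpair]
    exact Finset.prod_congr rfl fun u _ => hDu u
  -- disjointness of the two unions
  have hd1 : Disjoint (maxElts (Dset v)) ((Nset G v).biUnion (fun u => maxElts (Dset u))) := by
    rw [Finset.disjoint_left]
    intro x hx hxb
    obtain ⟨u, hu, hxu⟩ := Finset.mem_biUnion.mp hxb
    exact (mem_maxElts.mp hx).2 u (mem_Dset.mpr (mem_Nset.mp hu).1)
      (mem_Dset.mp (mem_maxElts.mp hxu).1)
  have hd2 : Disjoint (Nset G v) (maxElts (Fset G v)) := by
    rw [Finset.disjoint_left]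
    intro x hx hxm
    have := (mem_maxElts.mp hxm).1
    rw [mem_Fset] at this
    exact this.2 (mem_Nset.mp hx).2
  -- the key product identity
  have hkey : (∏ w ∈ maxElts (Dset v), BD w)
        * (∏ w ∈ (Nset G v).biUnion (fun u => maxElts (Dset u)), BD w)
      = (∏ u ∈ Nset G v, BD u) * (∏ w ∈ maxElts (Fset G v), BD w) := by
    rw [← Finset.prod_union hd1, ← Finset.prod_union hd2, key_union hG v]
  -- positivity
  have hZpos : 0 < ∏ w ∈ (Nset G v).biUnion (fun u => maxElts (Dset u)), BD w :=
    Finset.prod_pos fun w _ => hB (Dbar w)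
  have hYpos : 0 < ∏ w ∈ maxElts (Fset G v), BD w :=
    Finset.prod_pos fun w _ => hB (Dbar w)
  have hmain : ∏ u ∈ Nset G v, (Bfun G p (Dbar u) / Bfun G p (Dset u))
      = (∏ w ∈ maxElts (Dset v), BD w) / (∏ w ∈ maxElts (Fset G v), BD w) := by
    rw [Finset.prod_div_distrib, hQ, div_eq_div_iff hZpos.ne' hYpos.ne']
    linarith [hkey]
  exact ⟨hmain, by rw [hmain, hDv, hFv]⟩
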